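/- Let L be a linear operator on real n×n matrices that maps symmetric matrices to symmetric matrices. Then L is resolvent positive if and only if for all symmetric positive semidefinite real n×n matrices V₁ and V₂ with ⟨V₁, V₂⟩_F = 0 one has ⟨L(V₁), V₂⟩_F ≥ 0, where ⟨M₁, M₂⟩_F := trace(M₁ᵀ M₂) is the Frobenius inner product. -/

import Mathlib

open Matrix

/-- A linear operator `L` on real `n × n` matrices, mapping symmetric matrices to symmetric
matrices, is *resolvent positive* if there is `α₀ ∈ ℝ` such that for every `α > α₀` the
operator `α • id - L`, restricted to symmetric matrices, is bijective and its inverse maps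
every symmetric positive semidefinite matrix to a symmetric positive semidefinite matrix. -/
def ResolventPositive {n : ℕ} (L : Matrix (Fin n) (Fin n) ℝ → Matrix (Fin n) (Fin n) ℝ) : Prop :=
  ∃ α₀ : ℝ, ∀ α : ℝ, α₀ < α →
    (∀ Y : Matrix (Fin n) (Fin n) ℝ, Y.IsSymm →
      ∃! X : Matrix (Fin n) (Fin n) ℝ, X.IsSymm ∧ α • X - L X = Y) ∧
    (∀ X Y : Matrix (Fin n) (Fin n) ℝ, X.IsSymm → α • X - L X = Y → Y.PosSemidef →
      X.PosSemidef)



/-- The submodule of symmetric matrices. -/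
def RPaux.symmSub (n : ℕ) : Submodule ℝ (Matrix (Fin n) (Fin n) ℝ) where
  carrier := {X | X.IsSymm}
  add_mem' := fun ha hb => ha.add hb
  zero_mem' := isSymm_zero
  smul_mem' := fun c _ h => h.smul c


namespace RPaux
end RPaux

variable {n : ℕ}



lemma RPaux.isHermitian_of_isSymm {X : Matrix (Fin n) (Fin n) ℝ} (h : X.IsSymm) :
    X.IsHermitian := by
  rw [Matrix.IsHermitian, conjTranspose_eq_transpose_of_trivial, h]

lemma RPaux.spectral (X : Matrix (Fin n) (Fin n) ℝ) (hH : X.IsHermitian) :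
    X = (hH.eigenvectorUnitary : Matrix (Fin n) (Fin n) ℝ) * diagonal hH.eigenvalues *
      star (hH.eigenvectorUnitary : Matrix (Fin n) (Fin n) ℝ) := by
  have := hH.spectral_theorem
  simpa [Function.comp] using this

lemma RPaux.trace_transpose_mul_vecMulVec (M : Matrix (Fin n) (Fin n) ℝ) (v w : Fin n → ℝ) :
    (Mᵀ * vecMulVec v w).trace = v ⬝ᵥ (M *ᵥ w) := by
  simp only [Matrix.trace, Matrix.diag, Matrix.mul_apply, Matrix.vecMulVec_apply,
    Matrix.transpose_apply, dotProduct, Matrix.mulVec, Finset.mul_sum]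
  rw [Finset.sum_comm]
  exact Finset.sum_congr rfl fun i _ => Finset.sum_congr rfl fun j _ => by ring

lemma RPaux.psd_vecMulVec (v : Fin n → ℝ) : (vecMulVec v v).PosSemidef := by
  have h : vecMulVec v v = replicateCol (Fin 1) v * (replicateCol (Fin 1) v)ᴴ := by
    rw [conjTranspose_replicateCol, star_trivial]
    exact vecMulVec_eq (ι := Fin 1) v v
  rw [h]
  exact posSemidef_self_mul_conjTranspose _

lemma RPaux.shift_psd (X : Matrix (Fin n) (Fin n) ℝ) (hH : X.IsHermitian) (lam : ℝ)
    (hlam : ∀ i, lam ≤ hH.eigenvalues i) : (X - lam • 1).PosSemidef := by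
  set U : Matrix (Fin n) (Fin n) ℝ := (hH.eigenvectorUnitary : Matrix (Fin n) (Fin n) ℝ) with hU
  have hUU : U * star U = 1 := mem_unitaryGroup_iff.mp hH.eigenvectorUnitary.2
  have key : X - lam • 1 = U * diagonal (fun i => hH.eigenvalues i - lam) * star U := by
    have h1 : diagonal (fun i => hH.eigenvalues i - lam)
        = diagonal hH.eigenvalues - lam • 1 := by
      ext i j
      rcases eq_or_ne i j with h | h <;>
        simp [Matrix.diagonal_apply, Matrix.one_apply, Matrix.sub_apply, Matrix.smul_apply, h]
    rw [h1, Matrix.mul_sub, Matrix.sub_mul, ← RPaux.spectral X hH, Matrix.mul_smul,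
      Matrix.smul_mul, mul_one, hUU]
  rw [key]
  have hd : (diagonal (fun i => hH.eigenvalues i - lam)).PosSemidef :=
    posSemidef_diagonal_iff.mpr fun i => sub_nonneg.mpr (hlam i)
  have := hd.mul_mul_conjTranspose_same U
  rwa [← star_eq_conjTranspose] at this

open scoped MatrixOrder in
lemma RPaux.trace_psd_nonneg {A B : Matrix (Fin n) (Fin n) ℝ}
    (hA : A.PosSemidef) (hB : B.PosSemidef) : 0 ≤ (Aᵀ * B).trace := by
  have hAt : Aᵀ = A := by
    rw [← conjTranspose_eq_transpose_of_trivial, hA.isHermitian.eq]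
  set S := CFC.sqrt A with hSdef
  have hSS : S * S = A := CFC.sqrt_mul_sqrt_self A hA.nonneg
  have hM : (S * B * S).PosSemidef := by
    have := hB.mul_mul_conjTranspose_same S
    rwa [(CFC.sqrt_nonneg A).posSemidef.isHermitian.eq] at this
  have htr : (Aᵀ * B).trace = (S * B * S).trace := by
    rw [hAt, ← hSS, mul_assoc, trace_mul_comm]
  rw [htr, Matrix.trace]
  refine Finset.sum_nonneg fun i _ => ?_
  have := hM.dotProduct_mulVec_nonneg (Pi.single i 1)
  simpa [Matrix.diag] using this

lemma RPaux.isSymm_of_psd {X : Matrix (Fin n) (Fin n) ℝ} (h : X.PosSemidef) : X.IsSymm := by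
  have := h.isHermitian
  rwa [Matrix.IsHermitian, conjTranspose_eq_transpose_of_trivial] at this


section
attribute [local instance] Matrix.frobeniusNormedAddCommGroup Matrix.frobeniusNormedSpace

noncomputable instance RPaux.clmSNACG :
    SeminormedAddCommGroup (Matrix (Fin n) (Fin n) ℝ →L[ℝ] Matrix (Fin n) (Fin n) ℝ) :=
  ContinuousLinearMap.toSeminormedAddCommGroup


lemma RPaux.frob_norm_eq (A : Matrix (Fin n) (Fin n) ℝ) :
    ‖A‖ = Real.sqrt (∑ i, ∑ j, (A i j) ^ 2) := by
  rw [frobenius_norm_def, Real.sqrt_eq_rpow]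
  congr 1
  refine Finset.sum_congr rfl fun i _ => Finset.sum_congr rfl fun j _ => ?_
  rw [show (2:ℝ) = ((2:ℕ):ℝ) by norm_num, Real.rpow_natCast, Real.norm_eq_abs, sq_abs]

lemma RPaux.abs_trace_le (A B : Matrix (Fin n) (Fin n) ℝ) :
    |(Aᵀ * B).trace| ≤ ‖A‖ * ‖B‖ := by
  have ht : (Aᵀ * B).trace = ∑ p : Fin n × Fin n, A p.1 p.2 * B p.1 p.2 := by
    rw [Fintype.sum_prod_type]
    simp only [Matrix.trace, Matrix.diag, Matrix.mul_apply, Matrix.transpose_apply]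
    rw [Finset.sum_comm]
  have hcs := Finset.sum_mul_sq_le_sq_mul_sq Finset.univ
    (fun p : Fin n × Fin n => A p.1 p.2) (fun p => B p.1 p.2)
  rw [RPaux.frob_norm_eq, RPaux.frob_norm_eq, ht]
  rw [← Real.sqrt_sq_eq_abs, ← Real.sqrt_mul (by positivity)]
  apply Real.sqrt_le_sqrt
  calc (∑ p : Fin n × Fin n, A p.1 p.2 * B p.1 p.2) ^ 2
      ≤ (∑ p : Fin n × Fin n, A p.1 p.2 ^ 2) * ∑ p : Fin n × Fin n, B p.1 p.2 ^ 2 := hcs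
    _ = (∑ i, ∑ j, A i j ^ 2) * (∑ i, ∑ j, B i j ^ 2) := by rw [Fintype.sum_prod_type, Fintype.sum_prod_type]




lemma RPaux.opbound (L : Matrix (Fin n) (Fin n) ℝ →ₗ[ℝ] Matrix (Fin n) (Fin n) ℝ)
    (X : Matrix (Fin n) (Fin n) ℝ) :
    ‖L X‖ ≤ ‖LinearMap.toContinuousLinearMap L‖ * ‖X‖ := by
  exact (LinearMap.toContinuousLinearMap L).le_opNorm X

lemma RPaux.vanish (L : Matrix (Fin n) (Fin n) ℝ →ₗ[ℝ] Matrix (Fin n) (Fin n) ℝ)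
    {α : ℝ} (hα : ‖LinearMap.toContinuousLinearMap L‖ < α)
    {Z : Matrix (Fin n) (Fin n) ℝ} (hZ : α • Z - L Z = 0) : Z = 0 := by
  set C := ‖LinearMap.toContinuousLinearMap L‖ with hC
  have hC0 : 0 ≤ C := norm_nonneg _
  have h1 : α • Z = L Z := by rwa [sub_eq_zero] at hZ
  have h2 : α * ‖Z‖ ≤ C * ‖Z‖ := by
    calc α * ‖Z‖ = ‖α • Z‖ := by
          rw [norm_smul, Real.norm_eq_abs, abs_of_pos (lt_of_le_of_lt hC0 hα)]
      _ = ‖L Z‖ := by rw [h1]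
      _ ≤ C * ‖Z‖ := RPaux.opbound L Z
  by_contra hne
  have : 0 < ‖Z‖ := norm_pos_iff.mpr hne
  nlinarith


lemma RPaux.exists_unique_symm (L : Matrix (Fin n) (Fin n) ℝ →ₗ[ℝ] Matrix (Fin n) (Fin n) ℝ)
    (hLsymm : ∀ X : Matrix (Fin n) (Fin n) ℝ, X.IsSymm → (L X).IsSymm)
    {α : ℝ} (hα : ‖LinearMap.toContinuousLinearMap L‖ < α)
    (Y : Matrix (Fin n) (Fin n) ℝ) (hY : Y.IsSymm) :
    ∃! X : Matrix (Fin n) (Fin n) ℝ, X.IsSymm ∧ α • X - L X = Y := by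
  classical
  set f : Matrix (Fin n) (Fin n) ℝ →ₗ[ℝ] Matrix (Fin n) (Fin n) ℝ :=
    α • LinearMap.id - L with hf
  have hfapply : ∀ X, f X = α • X - L X := fun X => rfl
  have hinv : ∀ X ∈ RPaux.symmSub n, f X ∈ RPaux.symmSub n := by
    intro X hX
    have : (α • X - L X).IsSymm := ((hX.smul α)).sub (hLsymm X hX)
    exact this
  set T := f.restrict hinv with hT
  have hTinj : Function.Injective T := by
    intro a b hab
    have h0 : f (a - b : (RPaux.symmSub n)) = 0 := by
      have : T (a - b) = 0 := by rw [map_sub, hab, sub_self]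
      have := congrArg (Subtype.val) this
      simpa [hT, LinearMap.restrict_apply] using this
    have : ((a : Matrix (Fin n) (Fin n) ℝ) - b) = 0 := by
      apply RPaux.vanish L hα
      simpa [hfapply] using h0
    exact Subtype.ext (sub_eq_zero.mp (by exact_mod_cast this))
  have hTsurj : Function.Surjective T := (LinearMap.injective_iff_surjective).mp hTinj
  obtain ⟨x, hx⟩ := hTsurj ⟨Y, hY⟩
  refine ⟨(x : Matrix (Fin n) (Fin n) ℝ), ⟨x.2, ?_⟩, ?_⟩
  · have := congrArg Subtype.val hx
    simpa [hT, LinearMap.restrict_apply, hfapply] using this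
  · rintro X' ⟨hX's, hX'e⟩
    have hx' : α • (x : Matrix (Fin n) (Fin n) ℝ) - L x = Y := by
      have := congrArg Subtype.val hx
      simpa [hT, LinearMap.restrict_apply, hfapply] using this
    have h0 : α • (X' - (x : Matrix (Fin n) (Fin n) ℝ)) - L (X' - x) = 0 := by
      have : α • (X' - (x : Matrix (Fin n) (Fin n) ℝ)) - L (X' - x)
          = (α • X' - L X') - (α • (x : Matrix (Fin n) (Fin n) ℝ) - L x) := by
        rw [map_sub, smul_sub]; abel
      rw [this, hX'e, hx', sub_self]
    have := RPaux.vanish L hα h0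
    exact sub_eq_zero.mp this
lemma RPaux.psd_clause (L : Matrix (Fin n) (Fin n) ℝ →ₗ[ℝ] Matrix (Fin n) (Fin n) ℝ)
    (hyp : ∀ V₁ V₂ : Matrix (Fin n) (Fin n) ℝ, V₁.PosSemidef → V₂.PosSemidef →
      (V₁ᵀ * V₂).trace = 0 → 0 ≤ ((L V₁)ᵀ * V₂).trace)
    {α : ℝ} (hα : ‖L (1 : Matrix (Fin n) (Fin n) ℝ)‖ < α)
    {X Y : Matrix (Fin n) (Fin n) ℝ} (hX : X.IsSymm) (hE : α • X - L X = Y)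
    (hY : Y.PosSemidef) : X.PosSemidef := by
  have hH : X.IsHermitian := RPaux.isHermitian_of_isSymm hX
  rcases Nat.eq_zero_or_pos n with hn | hn
  · subst hn
    exact ⟨hH, fun x => by simp [Subsingleton.elim x 0]⟩
  haveI : Nonempty (Fin n) := ⟨⟨0, hn⟩⟩
  obtain ⟨i₀, -, hmin⟩ := Finset.exists_min_image Finset.univ hH.eigenvalues
    ⟨Classical.arbitrary _, Finset.mem_univ _⟩
  set lam := hH.eigenvalues i₀ with hlam
  set v : Fin n → ℝ := ⇑(hH.eigenvectorBasis i₀) with hv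
  -- v is a unit vector
  have hnorm : ‖hH.eigenvectorBasis i₀‖ = 1 := hH.eigenvectorBasis.orthonormal.1 i₀
  have hv1 : ∑ i, v i ^ 2 = 1 := by
    rw [EuclideanSpace.norm_eq] at hnorm
    have h0 : (0:ℝ) ≤ ∑ i, v i ^ 2 := Finset.sum_nonneg fun i _ => sq_nonneg _
    have : Real.sqrt (∑ i, v i ^ 2) = 1 := by
      rw [← hnorm]; congr 1
      exact Finset.sum_congr rfl fun i _ => by rw [Real.norm_eq_abs, sq_abs]
    nlinarith [Real.sq_sqrt h0, this]
  have hvv : v ⬝ᵥ v = 1 := by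
    rw [dotProduct]
    rw [← hv1]
    exact Finset.sum_congr rfl fun i _ => (sq (v i)) ▸ (pow_two (v i)).symm
  -- eigen equation
  have heig : X *ᵥ v = lam • v := hH.mulVec_eigenvectorBasis i₀
  -- V₂
  set V₂ := vecMulVec v v with hV₂def
  have hV₂ : V₂.PosSemidef := RPaux.psd_vecMulVec v
  have hV₂norm : ‖V₂‖ = 1 := by
    rw [RPaux.frob_norm_eq]
    have : ∑ i, ∑ j, (V₂ i j) ^ 2 = 1 := by
      have : ∀ i, ∑ j, (V₂ i j) ^ 2 = v i ^ 2 := by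
        intro i
        simp only [hV₂def, vecMulVec_apply, mul_pow, ← Finset.mul_sum, hv1, mul_one]
      rw [Finset.sum_congr rfl fun i _ => this i, hv1]
    rw [this, Real.sqrt_one]
  -- V₁
  set V₁ := X - lam • (1 : Matrix (Fin n) (Fin n) ℝ) with hV₁def
  have hV₁ : V₁.PosSemidef := RPaux.shift_psd X hH lam (fun i => hmin i (Finset.mem_univ i))
  have hV₁v : V₁ *ᵥ v = 0 := by
    rw [hV₁def, sub_mulVec, heig, smul_mulVec, one_mulVec, sub_self]
  have horth : (V₁ᵀ * V₂).trace = 0 := by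
    rw [hV₂def, RPaux.trace_transpose_mul_vecMulVec, hV₁v, dotProduct_zero]
  have hcross := hyp V₁ V₂ hV₁ hV₂ horth
  rw [hV₂def, RPaux.trace_transpose_mul_vecMulVec] at hcross
  -- expand L V₁
  have hLV₁ : L V₁ = L X - lam • L 1 := by rw [hV₁def, map_sub, LinearMap.map_smul]
  set q := v ⬝ᵥ (L X *ᵥ v) with hq
  set c := v ⬝ᵥ (L (1 : Matrix (Fin n) (Fin n) ℝ) *ᵥ v) with hc
  have hcross' : lam * c ≤ q := by
    rw [hLV₁, sub_mulVec, smul_mulVec, dotProduct_sub, dotProduct_smul] at hcross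
    have : (0:ℝ) ≤ q - lam * c := by simpa [smul_eq_mul] using hcross
    linarith
  -- Y at v
  have hYv : 0 ≤ v ⬝ᵥ (Y *ᵥ v) := by simpa using hY.dotProduct_mulVec_nonneg v
  have hYeq : v ⬝ᵥ (Y *ᵥ v) = α * lam - q := by
    rw [← hE, sub_mulVec, smul_mulVec, dotProduct_sub, dotProduct_smul, heig,
      dotProduct_smul, hvv]
    simp [smul_eq_mul, hq]
  -- bound on c
  have hcbound : c ≤ ‖L (1 : Matrix (Fin n) (Fin n) ℝ)‖ := by
    have h1 : c = ((L (1 : Matrix (Fin n) (Fin n) ℝ))ᵀ * V₂).trace :=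
      (RPaux.trace_transpose_mul_vecMulVec _ v v).symm
    have h2 := RPaux.abs_trace_le (L (1 : Matrix (Fin n) (Fin n) ℝ)) V₂
    rw [hV₂norm, mul_one] at h2
    calc c ≤ |c| := le_abs_self _
      _ = |((L (1 : Matrix (Fin n) (Fin n) ℝ))ᵀ * V₂).trace| := by rw [h1]
      _ ≤ _ := h2
  -- conclude lam ≥ 0
  have hlam0 : 0 ≤ lam := by nlinarith
  -- hence X PSD
  have := RPaux.shift_psd X hH 0 (fun i => le_trans hlam0 (hmin i (Finset.mem_univ i)))
  simpa using this

lemma RPaux.forward (L : Matrix (Fin n) (Fin n) ℝ →ₗ[ℝ] Matrix (Fin n) (Fin n) ℝ)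
    (hRP : ResolventPositive (fun X => L X)) :
    ∀ V₁ V₂ : Matrix (Fin n) (Fin n) ℝ, V₁.PosSemidef → V₂.PosSemidef →
      (V₁ᵀ * V₂).trace = 0 → 0 ≤ ((L V₁)ᵀ * V₂).trace := by
  intro V₁ V₂ hV₁ hV₂ horth
  obtain ⟨α₀, hα₀⟩ := hRP
  set C := ‖LinearMap.toContinuousLinearMap L‖ with hC
  have hC0 : 0 ≤ C := norm_nonneg _
  set K := C ^ 2 * ‖V₁‖ * ‖V₂‖ with hK
  have hK0 : 0 ≤ K := by positivity
  set r := ((L V₁)ᵀ * V₂).trace with hr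
  refine le_of_forall_pos_le_add ?_
  intro ε hε
  set α := max α₀ C + K / ε + 1 with hαdef
  clear_value C K r α
  have hop : ∀ Z : Matrix (Fin n) (Fin n) ℝ, ‖L Z‖ ≤ C * ‖Z‖ := fun Z => by
    rw [hC]; exact RPaux.opbound L Z
  have hKε : 0 ≤ K / ε := by positivity
  have hαα₀ : α₀ < α := by
    have := le_max_left α₀ C; simp only [hαdef]; linarith
  have hαC : C < α := by
    have := le_max_right α₀ C; simp only [hαdef]; linarith
  have hα0 : 0 < α := lt_of_le_of_lt hC0 hαC
  have hαCK : K / ε + 1 ≤ α - C := by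
    have := le_max_right α₀ C; simp only [hαdef]; linarith
  obtain ⟨hbij, hpos⟩ := hα₀ α hαα₀
  obtain ⟨X, ⟨hXs, hXe⟩, -⟩ := hbij V₁ (RPaux.isSymm_of_psd hV₁)
  simp only at hXe
  have hXpsd : X.PosSemidef := hpos X V₁ hXs hXe hV₁
  -- basic trace facts
  have hXV₂ : 0 ≤ (Xᵀ * V₂).trace := RPaux.trace_psd_nonneg hXpsd hV₂
  have hLXeq : L X = α • X - V₁ := by rw [← hXe]; abel
  have hLXtr : ((L X)ᵀ * V₂).trace = α * (Xᵀ * V₂).trace := by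
    rw [hLXeq, transpose_sub, transpose_smul, Matrix.sub_mul, Matrix.smul_mul, trace_sub,
      trace_smul, horth, sub_zero, smul_eq_mul]
  have hLXtr0 : 0 ≤ ((L X)ᵀ * V₂).trace := by
    rw [hLXtr]; exact mul_nonneg hα0.le hXV₂
  -- norm bound on X
  have hXnorm : (α - C) * ‖X‖ ≤ ‖V₁‖ := by
    have h1 : α • X = V₁ + L X := by rw [← hXe]; abel
    have h2 : α * ‖X‖ = ‖α • X‖ := by
      rw [norm_smul, Real.norm_eq_abs, abs_of_pos hα0]
    have h3 : ‖α • X‖ ≤ ‖V₁‖ + C * ‖X‖ := by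
      rw [h1]; exact (norm_add_le _ _).trans (by linarith [hop X])
    nlinarith
  -- decompose r
  have hdecomp : L V₁ = L (V₁ - α • X) + α • L X := by
    rw [map_sub, LinearMap.map_smul]; abel
  have htr_decomp : r = ((L (V₁ - α • X))ᵀ * V₂).trace + α * ((L X)ᵀ * V₂).trace := by
    rw [hr, hdecomp, transpose_add, transpose_smul, Matrix.add_mul, Matrix.smul_mul,
      trace_add, trace_smul, smul_eq_mul]
  have hV₁αX : V₁ - α • X = -(L X) := by rw [← hXe]; abel
  have hnorm1 : ‖V₁ - α • X‖ ≤ C * ‖X‖ := by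
    rw [hV₁αX, norm_neg]; exact hop X
  have hterm1 : -(C * (C * ‖X‖) * ‖V₂‖) ≤ ((L (V₁ - α • X))ᵀ * V₂).trace := by
    have h1 := RPaux.abs_trace_le (L (V₁ - α • X)) V₂
    have h2 := hop (V₁ - α • X)
    have h3 : ‖L (V₁ - α • X)‖ * ‖V₂‖ ≤ C * (C * ‖X‖) * ‖V₂‖ := by
      have : ‖L (V₁ - α • X)‖ ≤ C * (C * ‖X‖) :=
        h2.trans (by nlinarith)
      exact mul_le_mul_of_nonneg_right this (norm_nonneg _)
    have := neg_abs_le (((L (V₁ - α • X))ᵀ * V₂).trace)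
    linarith
  -- combine
  have hXn0 : 0 ≤ ‖X‖ := norm_nonneg _
  have hεα : C * (C * ‖X‖) * ‖V₂‖ ≤ ε := by
    have hαCpos : 0 < α - C := by linarith
    have h1 : ‖X‖ ≤ ‖V₁‖ / (α - C) := by
      rw [le_div_iff₀ hαCpos]; nlinarith
    have h2 : C * (C * ‖X‖) * ‖V₂‖ ≤ K / (α - C) := by
      rw [le_div_iff₀ hαCpos]
      have hmul := mul_le_mul_of_nonneg_left hXnorm (mul_nonneg (mul_nonneg hC0 hC0)
        (norm_nonneg V₂))
      have heq : C * (C * ‖X‖) * ‖V₂‖ * (α - C) = C * C * ‖V₂‖ * ((α - C) * ‖X‖) := by ring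
      have heq2 : C * C * ‖V₂‖ * ‖V₁‖ = K := by rw [hK]; ring
      linarith
    have h3 : K / (α - C) ≤ ε := by
      rw [div_le_iff₀ hαCpos]
      have h4 : ε * (K / ε + 1) ≤ ε * (α - C) := mul_le_mul_of_nonneg_left hαCK hε.le
      have hKe : ε * (K / ε) = K := by field_simp
      have h5 : ε * (K / ε + 1) = K + ε := by rw [mul_add, hKe, mul_one]
      linarith
    linarith
  have : -ε ≤ r := by
    rw [htr_decomp]
    have : 0 ≤ α * ((L X)ᵀ * V₂).trace := mul_nonneg hα0.le hLXtr0
    linarith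
  linarith


/-- A linear operator `L` mapping symmetric matrices to symmetric matrices is resolvent
positive if and only if for all symmetric positive semidefinite `V₁, V₂` with
`⟨V₁, V₂⟩_F = 0` one has `⟨L V₁, V₂⟩_F ≥ 0`, where `⟨M₁, M₂⟩_F = trace (M₁ᵀ M₂)` is the
Frobenius inner product. -/
theorem resolventPositive_iff_frobenius {n : ℕ}
    (L : Matrix (Fin n) (Fin n) ℝ →ₗ[ℝ] Matrix (Fin n) (Fin n) ℝ)
    (hLsymm : ∀ X : Matrix (Fin n) (Fin n) ℝ, X.IsSymm → (L X).IsSymm) :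
    ResolventPositive (fun X => L X) ↔
      ∀ V₁ V₂ : Matrix (Fin n) (Fin n) ℝ, V₁.PosSemidef → V₂.PosSemidef →
        (V₁ᵀ * V₂).trace = 0 → 0 ≤ ((L V₁)ᵀ * V₂).trace := by
  constructor
  · exact fun hRP => RPaux.forward L hRP
  · intro hyp
    refine ⟨‖LinearMap.toContinuousLinearMap L‖ + ‖L (1 : Matrix (Fin n) (Fin n) ℝ)‖,
      fun α hα => ⟨?_, ?_⟩⟩
    · have h1 : ‖LinearMap.toContinuousLinearMap L‖ < α :=
        lt_of_le_of_lt (le_add_of_nonneg_right (norm_nonneg _)) hα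
      exact fun Y hY => RPaux.exists_unique_symm L hLsymm h1 Y hY
    · have h2 : ‖L (1 : Matrix (Fin n) (Fin n) ℝ)‖ < α :=
        lt_of_le_of_lt (le_add_of_nonneg_left (norm_nonneg _)) hα
      exact fun X Y hX hE hYp => RPaux.psd_clause L hyp h2 hX hE hYp

end
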